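/- Let ρ₀, ρ₁ be density matrices on ℂ^d, let τ > 0, and let Π* be the spectral projection of the Hermitian matrix ρ₁ − τ ρ₀ onto its positive eigenspace. Then for every matrix Π with 0 ≤ Π ≤ I, the quantity Re Tr(Π ρ₁) − τ · Re Tr(Π ρ₀) (the detection rate minus τ times the false alarm rate) is maximized at Π = Π*, i.e., Re Tr(Π ρ₁) − τ Re Tr(Π ρ₀) ≤ Re Tr(Π* ρ₁) − τ Re Tr(Π* ρ₀). -/

import Mathlib

open Matrix Finset ComplexOrder

/-- The spectral projection of a matrix onto the span of its eigenvectors with positive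
eigenvalues (`∑_{j : η_j > 0} |η_j⟩⟨η_j|`), defined to be `0` if the matrix is not Hermitian. -/
noncomputable def posEigenProjection {d : ℕ} (A : Matrix (Fin d) (Fin d) ℂ) :
    Matrix (Fin d) (Fin d) ℂ :=
  if hA : A.IsHermitian then
    (hA.eigenvectorUnitary : Matrix (Fin d) (Fin d) ℂ) *
      Matrix.diagonal (fun j => if 0 < hA.eigenvalues j then (1 : ℂ) else 0) *
      star (hA.eigenvectorUnitary : Matrix (Fin d) (Fin d) ℂ)
  else 0

lemma diag_re_nonneg {d : ℕ} {M : Matrix (Fin d) (Fin d) ℂ} (hM : M.PosSemidef) (j : Fin d) :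
    0 ≤ (M j j).re := by
  have h := hM.diag_nonneg (i := j)
  rw [Complex.le_def] at h
  simpa using h.1

/-- The spectral projection `Π*` of `ρ₁ − τ ρ₀` onto its positive eigenspace maximizes the
detection rate minus `τ` times the false alarm rate, `Re Tr(Π ρ₁) − τ Re Tr(Π ρ₀)`, over all
measurement operators `0 ≤ Π ≤ I`. -/
theorem detection_minus_false_alarm_maximized_by_spectral_projection
    (d : ℕ) (ρ₀ ρ₁ : Matrix (Fin d) (Fin d) ℂ)
    (hρ₀ : ρ₀.PosSemidef) (hρ₀tr : ρ₀.trace = 1)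
    (hρ₁ : ρ₁.PosSemidef) (hρ₁tr : ρ₁.trace = 1)
    (τ : ℝ) (hτ : 0 < τ) :
    ∀ P : Matrix (Fin d) (Fin d) ℂ, P.PosSemidef → (1 - P).PosSemidef →
      (P * ρ₁).trace.re - τ * (P * ρ₀).trace.re ≤
        (posEigenProjection (ρ₁ - (τ : ℂ) • ρ₀) * ρ₁).trace.re -
          τ * (posEigenProjection (ρ₁ - (τ : ℂ) • ρ₀) * ρ₀).trace.re := by
  intro P hP hP'
  set A : Matrix (Fin d) (Fin d) ℂ := ρ₁ - (τ : ℂ) • ρ₀ with hAdef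
  have hA : A.IsHermitian := by
    unfold Matrix.IsHermitian
    rw [hAdef, conjTranspose_sub, conjTranspose_smul, hρ₀.1, hρ₁.1]
    norm_num
  set U : Matrix (Fin d) (Fin d) ℂ := (hA.eigenvectorUnitary : Matrix (Fin d) (Fin d) ℂ) with hUdef
  have hU1 : star U * U = 1 := Matrix.mem_unitaryGroup_iff'.mp hA.eigenvectorUnitary.2
  have hU2 : U * star U = 1 := Matrix.mem_unitaryGroup_iff.mp hA.eigenvectorUnitary.2
  set D' : Matrix (Fin d) (Fin d) ℂ :=
    Matrix.diagonal (fun j => if 0 < hA.eigenvalues j then (1 : ℂ) else 0) with hD'def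
  have hproj : posEigenProjection A = U * D' * star U := by
    rw [posEigenProjection, dif_pos hA]
  -- general trace formula
  have key : ∀ Q : Matrix (Fin d) (Fin d) ℂ,
      (Q * A).trace = ∑ j, (star U * Q * U) j j * (hA.eigenvalues j : ℂ) := by
    intro Q
    conv_lhs => rw [hA.spectral_theorem, Unitary.conjStarAlgAut_apply]
    rw [show Q * (U * Matrix.diagonal (RCLike.ofReal ∘ hA.eigenvalues) * star U) =
        (Q * U) * Matrix.diagonal (RCLike.ofReal ∘ hA.eigenvalues) * star U by noncomm_ring,
      Matrix.trace_mul_cycle, ← Matrix.mul_assoc]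
    rw [Matrix.trace]
    simp [Matrix.diag, Matrix.mul_diagonal, Function.comp]
  -- simplify goals to traces against A
  have reduce : ∀ Q : Matrix (Fin d) (Fin d) ℂ,
      (Q * ρ₁).trace.re - τ * (Q * ρ₀).trace.re = (Q * A).trace.re := by
    intro Q
    rw [hAdef, Matrix.mul_sub, Matrix.mul_smul, Matrix.trace_sub, Matrix.trace_smul]
    simp [Complex.sub_re, Complex.smul_re]
  rw [reduce, reduce, hproj]
  -- RHS value
  have hMproj : star U * (U * D' * star U) * U = D' := by
    rw [show star U * (U * D' * star U) * U = (star U * U) * D' * (star U * U) by noncomm_ring, hU1]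
    simp
  rw [key P, key (U * D' * star U), hMproj]
  rw [Complex.re_sum, Complex.re_sum]
  apply Finset.sum_le_sum
  intro j _
  have hre : ∀ z : ℂ, ∀ r : ℝ, (z * (r : ℂ)).re = z.re * r := by
    intro z r; simp [Complex.mul_re]
  rw [hre, hD'def]
  rw [Matrix.diagonal_apply_eq]
  have h0 : 0 ≤ ((star U * P * U) j j).re :=
    diag_re_nonneg (hP.conjTranspose_mul_mul_same U) j
  have h1 : ((star U * P * U) j j).re ≤ 1 := by
    have hps : ((star U * (1 - P) * U)).PosSemidef := by
      have := hP'.conjTranspose_mul_mul_same U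
      exact this
    have := diag_re_nonneg hps j
    have he : (star U * (1 - P) * U) j j = (1 : Matrix (Fin d) (Fin d) ℂ) j j
        - (star U * P * U) j j := by
      rw [show star U * (1 - P) * U = star U * U - star U * P * U by noncomm_ring, hU1]
      simp [Matrix.sub_apply]
    rw [he] at this
    simp [Matrix.one_apply] at this
    linarith
  by_cases hη : 0 < hA.eigenvalues j
  · rw [if_pos hη]
    rw [one_mul, Complex.ofReal_re]
    nlinarith
  · rw [if_neg hη]
    rw [zero_mul, Complex.zero_re]
    push_neg at hη
    nlinarith
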